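/- Let m ∈ ℕ, let p ∈ (0,1), let f_k(x) = (x+k)/2^m for k ∈ {0,…,2^m−1}, and let μ be a Borel probability measure on [0,1] satisfying μ(B) = p · μ(f_{2^m−2}^{-1}(B)) + (1−p) · μ(f_{2^m−1}^{-1}(B)) for every Borel set B ⊆ [0,1] (i.e. μ is invariant for the probability vector P = (0,…,0,p,1−p)). Then the probability distribution function Φ(x) = μ([0,x]) satisfies: Φ(x) = 0 if and only if x ∈ [0, (2^m−2)/(2^m−1)]. -/

import Mathlib

open MeasureTheory

/-- If `μ` is invariant for the IFS `f_k(x) = (x+k)/2^m` with probability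
vector `P = (0,…,0,p,1−p)`, then its distribution function `Φ(x) = μ([0,x])` vanishes at
`x ∈ [0,1]` exactly when `x ∈ [0, (2^m−2)/(2^m−1)]`. -/
theorem stmt_17 (m : ℕ) (hm : 1 ≤ m) (p : ℝ) (hp : p ∈ Set.Ioo (0:ℝ) 1)
    (μ : Measure ℝ) [IsProbabilityMeasure μ] (hμ : μ (Set.Icc (0:ℝ) 1) = 1)
    (hinv : ∀ B ⊆ Set.Icc (0:ℝ) 1, MeasurableSet B →
      μ B = ENNReal.ofReal p * μ ((fun x : ℝ => (x + (2 ^ m - 2 : ℕ)) / 2 ^ m) ⁻¹' B)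
        + ENNReal.ofReal (1 - p) * μ ((fun x : ℝ => (x + (2 ^ m - 1 : ℕ)) / 2 ^ m) ⁻¹' B))
    (Φ : ℝ → ℝ) (hΦ : ∀ x, Φ x = (μ (Set.Icc 0 x)).toReal) :
    ∀ x ∈ Set.Icc (0:ℝ) 1,
      (Φ x = 0 ↔ x ≤ ((2 : ℝ) ^ m - 2) / ((2 : ℝ) ^ m - 1)) := by
  obtain ⟨hp0, hp1⟩ := hp
  have h2mn : (2:ℕ) ≤ 2 ^ m := by
    calc (2:ℕ) = 2 ^ 1 := (pow_one 2).symm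
    _ ≤ 2 ^ m := Nat.pow_le_pow_right (by norm_num) hm
  have h1mn : (1:ℕ) ≤ 2 ^ m := le_trans (by norm_num) h2mn
  have h2m : (2:ℝ) ≤ 2 ^ m := by exact_mod_cast h2mn
  have hp2 : (0:ℝ) < 2 ^ m := by positivity
  have hApos : (0:ℝ) ≤ (2:ℝ) ^ m - 2 := by linarith
  have hden : (0:ℝ) < (2:ℝ) ^ m - 1 := by linarith
  have hcasta : ((2 ^ m - 2 : ℕ) : ℝ) = (2:ℝ) ^ m - 2 := by
    rw [Nat.cast_sub h2mn]; push_cast; ring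
  have hcastb : ((2 ^ m - 1 : ℕ) : ℝ) = (2:ℝ) ^ m - 1 := by
    rw [Nat.cast_sub h1mn]; push_cast; ring
  set c : ℝ := ((2:ℝ) ^ m - 2) / ((2:ℝ) ^ m - 1) with hc
  have hc0 : 0 ≤ c := div_nonneg hApos hden.le
  have hc1 : c < 1 := by rw [hc, div_lt_one hden]; linarith
  have hcc : (2:ℝ) ^ m * c - ((2:ℝ) ^ m - 2) = c := by
    rw [hc]; field_simp; ring
  -- μ is concentrated on [0,1]
  have hcompl : μ (Set.Icc (0:ℝ) 1)ᶜ = 0 := by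
    rw [measure_compl measurableSet_Icc (measure_ne_top μ _), hμ, measure_univ]
    simp
  have hres : ∀ s : Set ℝ, μ s = μ (s ∩ Set.Icc 0 1) := by
    intro s
    apply le_antisymm
    · calc μ s ≤ μ (s ∩ Set.Icc 0 1 ∪ (Set.Icc (0:ℝ) 1)ᶜ) := by
            apply measure_mono
            intro y hy
            by_cases h : y ∈ Set.Icc (0:ℝ) 1
            · exact Or.inl ⟨hy, h⟩
            · exact Or.inr h
        _ ≤ μ (s ∩ Set.Icc 0 1) + μ (Set.Icc (0:ℝ) 1)ᶜ := measure_union_le _ _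
        _ = μ (s ∩ Set.Icc 0 1) := by rw [hcompl, add_zero]
    · exact measure_mono Set.inter_subset_left
  -- preimage computation
  have hpre : ∀ (k x : ℝ),
      (fun y : ℝ => (y + k) / 2 ^ m) ⁻¹' Set.Icc 0 x = Set.Icc (-k) (2 ^ m * x - k) := by
    intro k x
    ext y
    simp only [Set.mem_preimage, Set.mem_Icc, le_div_iff₀ hp2, div_le_iff₀ hp2]
    constructor <;> rintro ⟨h1, h2⟩ <;> constructor <;> nlinarith
  -- Step 1: μ (Icc 0 c) = 0
  have hinvc := hinv (Set.Icc 0 c) (Set.Icc_subset_Icc le_rfl hc1.le) measurableSet_Icc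
  rw [hpre, hpre, hcasta, hcastb, hcc] at hinvc
  have hA0 : (-((2:ℝ) ^ m - 2)) ≤ 0 := by linarith
  have hfirst : μ (Set.Icc (-((2:ℝ) ^ m - 2)) c) = μ (Set.Icc 0 c) := by
    rw [hres (Set.Icc (-((2:ℝ) ^ m - 2)) c), Set.Icc_inter_Icc,
      max_eq_right hA0, min_eq_left hc1.le]
  have hsecond : μ (Set.Icc (-((2:ℝ) ^ m - 1)) ((2:ℝ) ^ m * c - ((2:ℝ) ^ m - 1))) = 0 := by
    rw [hres, Set.Icc_inter_Icc]
    have : min ((2:ℝ) ^ m * c - ((2:ℝ) ^ m - 1)) 1 < max (-((2:ℝ) ^ m - 1)) 0 := by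
      have h1 : (2:ℝ) ^ m * c - ((2:ℝ) ^ m - 1) = c - 1 := by linarith [hcc]
      rw [h1]
      have : c - 1 < 0 := by linarith
      calc min (c - 1) 1 ≤ c - 1 := min_le_left _ _
        _ < 0 := this
        _ ≤ max (-((2:ℝ) ^ m - 1)) 0 := le_max_right _ _
    rw [Set.Icc_eq_empty (not_le.mpr this)]
    exact measure_empty
  rw [hfirst, hsecond, mul_zero, add_zero] at hinvc
  have hzero : μ (Set.Icc (0:ℝ) c) = 0 := by
    by_contra hne
    have hlt : ENNReal.ofReal p * μ (Set.Icc 0 c) < 1 * μ (Set.Icc 0 c) :=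
      by have := ENNReal.mul_lt_mul_right hne (measure_ne_top μ _)
            (show ENNReal.ofReal p < 1 by simpa using ENNReal.ofReal_lt_one.mpr hp1)
         rwa [mul_comm, mul_comm (μ (Set.Icc 0 c)) 1] at this
    rw [one_mul] at hlt
    exact absurd hinvc (ne_of_gt hlt)
  -- Step 2: induction
  have hkey : ∀ n : ℕ, ∀ x : ℝ, c < x → x ≤ 1 →
      1 - c ≤ 2 ^ (m * n) * (x - c) → μ (Set.Icc 0 x) ≠ 0 := by
    intro n
    induction n with
    | zero =>
      intro x hcx hx1 hge
      have hx : x = 1 := by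
        have : (1:ℝ) - c ≤ x - c := by simpa using hge
        linarith
      rw [hx, hμ]
      exact one_ne_zero
    | succ n ih =>
      intro x hcx hx1 hge
      have hB := hinv (Set.Icc 0 x) (Set.Icc_subset_Icc le_rfl hx1) measurableSet_Icc
      rw [hpre, hpre, hcasta, hcastb] at hB
      set t : ℝ := 2 ^ m * x - ((2:ℝ) ^ m - 2) with ht
      have htc : t - c = 2 ^ m * (x - c) := by rw [ht]; linarith [hcc]
      have htgt : c < t := by nlinarith
      have hppos : ENNReal.ofReal p ≠ 0 := by
        simp [ENNReal.ofReal_eq_zero, not_le, hp0]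
      have hfne : μ (Set.Icc (-((2:ℝ) ^ m - 2)) t) ≠ 0 := by
        rcases le_or_gt 1 t with h1t | ht1
        · have hle : μ (Set.Icc (0:ℝ) 1) ≤ μ (Set.Icc (-((2:ℝ) ^ m - 2)) t) :=
            measure_mono (Set.Icc_subset_Icc hA0 h1t)
          rw [hμ] at hle
          intro h0
          rw [h0] at hle
          exact absurd hle (by simp)
        · have hge' : 1 - c ≤ 2 ^ (m * n) * (t - c) := by
            rw [htc, ← mul_assoc]
            have : (2:ℝ) ^ (m * n) * 2 ^ m = 2 ^ (m * (n + 1)) := by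
              rw [← pow_add]; ring_nf
            rw [this]
            exact hge
          have := ih t htgt ht1.le hge'
          intro h0
          apply this
          exact le_antisymm (le_trans (measure_mono (Set.Icc_subset_Icc hA0 le_rfl)) h0.le)
            zero_le
      intro h0
      rw [h0] at hB
      have := (add_eq_zero.mp hB.symm).1
      exact (mul_ne_zero hppos hfne) this
  -- conclude
  intro x ⟨hx0, hx1⟩
  rw [hΦ]
  constructor
  · intro hphi
    by_contra hgt
    push_neg at hgt
    -- find n
    obtain ⟨N, hN⟩ := exists_nat_gt ((1 - c) / (x - c))
    have hxc : 0 < x - c := by linarith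
    have hpow : (N:ℝ) ≤ 2 ^ (m * N) := by
      have h1 : N ≤ 2 ^ N := Nat.le_of_lt (Nat.lt_two_pow_self (n := N))
      have h2 : (2:ℕ) ^ N ≤ 2 ^ (m * N) :=
        Nat.pow_le_pow_right (by norm_num) (Nat.le_mul_of_pos_left N hm)
      calc (N:ℝ) ≤ ((2:ℕ) ^ N : ℕ) := by exact_mod_cast h1
        _ ≤ ((2:ℕ) ^ (m * N) : ℕ) := by exact_mod_cast h2
        _ = (2:ℝ) ^ (m * N) := by push_cast; ring
    have hge : 1 - c ≤ 2 ^ (m * N) * (x - c) := by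
      have h1 : (1 - c) / (x - c) < N := hN
      have h2 : 1 - c < N * (x - c) := by
        rw [div_lt_iff₀ hxc] at h1; linarith
      nlinarith
    have := hkey N x hgt hx1 hge
    rw [ENNReal.toReal_eq_zero_iff] at hphi
    rcases hphi with h | h
    · exact this h
    · exact (measure_ne_top μ _) h
  · intro hle
    have : μ (Set.Icc 0 x) = 0 :=
      le_antisymm (le_trans (measure_mono (Set.Icc_subset_Icc le_rfl hle)) hzero.le) zero_le
    rw [this]
    simp
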